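/- Let k, m, n be positive integers with k dividing m, k < m, and n ≥ 2, and let A be the m×n matrix with first column A_{j,1} = 1/√k for j ≤ k and 0 for j > k, and A_{j,i} = 1/√m for all 2 ≤ i ≤ n and all j ∈ [m]. Then AᵀA has exactly two nonzero eigenvalues, namely λ_{1,2} = (n ± √(n² − 4(n−1)(1 − k/m)))/2, each with multiplicity 1; moreover these satisfy ((λ₁ − 1)(λ₂ − 1))²(m − k)² = k²(λ₁λ₂)². -/

import Mathlib

open scoped BigOperators
open Polynomial Matrix

set_option maxHeartbeats 1000000 in
private lemma gram_aux (p : ℕ) (t s lam1 lam2 : ℝ)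
    (hts : t^2 + s = 1)
    (hsum : lam1 + lam2 = ((p:ℝ)+2))
    (hprod : lam1 * lam2 = (((p:ℝ)+2) - 1) * s) :
    (Matrix.of fun i j : Fin (p+2) =>
      (if (i:ℕ) = 0 then (1:ℝ) else t) * (if (j:ℕ) = 0 then 1 else t)
      + s * ((if (i:ℕ) = 0 then 0 else 1) * (if (j:ℕ) = 0 then 0 else 1))).charpoly
    = (X - C lam1) * (X - C lam2) * X ^ p := by
  set w : Fin (p+2) → ℝ := fun i => if (i:ℕ) = 0 then 1 else t with hw
  set v : Fin (p+2) → ℝ := fun i => if (i:ℕ) = 0 then 0 else 1 with hv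
  set G : Matrix (Fin (p+2)) (Fin (p+2)) ℝ :=
    Matrix.of (fun i j => w i * w j + s * (v i * v j)) with hG
  show G.charpoly = _
  -- generic sums
  have hgen : ∀ a b : ℝ, (∑ i : Fin (p+2), if (i:ℕ) = 0 then a else b) = a + ((p:ℝ)+1) * b := by
    intro a b
    rw [Fin.sum_univ_eq_sum_range (fun l => if l = 0 then a else b) (p+2),
      Finset.sum_range_succ' (fun l => if l = 0 then a else b) (p+1)]
    simp [Finset.sum_const]
    ring
  have hw2 : (∑ j : Fin (p+2), w j * w j) = 1 + ((p:ℝ)+1) * t^2 := by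
    rw [Finset.sum_congr rfl (fun j _ => show w j * w j = if (j:ℕ) = 0 then (1:ℝ) else t^2 by
      by_cases h : (j:ℕ) = 0 <;> simp only [Fin.val_eq_zero_iff] at h <;> simp [hw, h, sq]), hgen]
  have hwv : (∑ j : Fin (p+2), w j * v j) = ((p:ℝ)+1) * t := by
    rw [Finset.sum_congr rfl (fun j _ => show w j * v j = if (j:ℕ) = 0 then (0:ℝ) else t by
      by_cases h : (j:ℕ) = 0 <;> simp only [Fin.val_eq_zero_iff] at h <;> simp [hw, hv, h]), hgen]
    simp
  have hvw : (∑ j : Fin (p+2), v j * w j) = ((p:ℝ)+1) * t := by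
    rw [Finset.sum_congr rfl (fun j _ => show v j * w j = if (j:ℕ) = 0 then (0:ℝ) else t by
      by_cases h : (j:ℕ) = 0 <;> simp only [Fin.val_eq_zero_iff] at h <;> simp [hw, hv, h]), hgen]
    simp
  have hv2 : (∑ j : Fin (p+2), v j * v j) = ((p:ℝ)+1) := by
    rw [Finset.sum_congr rfl (fun j _ => show v j * v j = if (j:ℕ) = 0 then (0:ℝ) else 1 by
      by_cases h : (j:ℕ) = 0 <;> simp only [Fin.val_eq_zero_iff] at h <;> simp [hv, h]), hgen]
    simp
  -- move to the fraction field
  set K := FractionRing (Polynomial ℝ)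
  set φ : Polynomial ℝ →+* K := (algebraMap (Polynomial ℝ) K : Polynomial ℝ →+* K) with hφ
  have hinj : Function.Injective φ := IsFractionRing.injective (Polynomial ℝ) K
  apply hinj
  set ρ : ℝ →+* K := φ.comp (C : ℝ →+* Polynomial ℝ) with hρ
  set x : K := φ X with hx
  have hx0 : x ≠ 0 := by
    rw [hx]
    intro h
    exact Polynomial.X_ne_zero (hinj (by simpa using h))
  set U : Matrix (Fin (p+2)) (Fin 2) K :=
    Matrix.of (fun i q => if q = 0 then ρ (w i) else ρ (v i)) with hU
  set B : Matrix (Fin 2) (Fin (p+2)) K :=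
    Matrix.of (fun q j => -(x⁻¹) * (if q = 0 then ρ (w j) else ρ s * ρ (v j))) with hB
  have hUB : ∀ i j, (U * B) i j = -(x⁻¹) * ρ (G i j) := by
    intro i j
    rw [Matrix.mul_apply, Fin.sum_univ_two]
    simp only [hU, hB, Matrix.of_apply, if_pos, if_neg (show (1 : Fin 2) ≠ 0 by decide), hG,
      _root_.map_add, _root_.map_mul]
    ring
  have hchar : (charmatrix G).map φ = x • (1 + U * B) := by
    ext i j
    rw [Matrix.map_apply, Matrix.smul_apply, Matrix.add_apply, hUB i j, Matrix.one_apply]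
    by_cases h : i = j
    · subst h
      rw [charmatrix_apply_eq, if_pos rfl, map_sub]
      have : ρ (G i i) = φ (C (G i i)) := rfl
      rw [smul_eq_mul, ← this, ← hx]
      linear_combination ρ (G i i) * mul_inv_cancel₀ hx0
    · rw [charmatrix_apply_ne _ _ _ h, if_neg h, map_neg]
      have : ρ (G i j) = φ (C (G i j)) := rfl
      rw [smul_eq_mul, ← this]
      linear_combination ρ (G i j) * mul_inv_cancel₀ hx0
  have hdet : φ (G.charpoly) = x ^ (p+2) * (1 + B * U).det := by
    rw [Matrix.charpoly, RingHom.map_det, RingHom.mapMatrix_apply, hchar, Matrix.det_smul,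
      Matrix.det_one_add_mul_comm]
    simp
  -- compute the 2x2 determinant entries
  have e00 : (B * U) 0 0 = -(x⁻¹) * ρ (1 + ((p:ℝ)+1) * t^2) := by
    rw [Matrix.mul_apply]
    rw [Finset.sum_congr rfl (fun j _ => show B 0 j * U j 0 = -(x⁻¹) * ρ (w j * w j) by
      simp [hU, hB, _root_.map_mul]; ring), ← Finset.mul_sum, ← map_sum, hw2]
  have e01 : (B * U) 0 1 = -(x⁻¹) * ρ (((p:ℝ)+1) * t) := by
    rw [Matrix.mul_apply]
    rw [Finset.sum_congr rfl (fun j _ => show B 0 j * U j 1 = -(x⁻¹) * ρ (w j * v j) by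
      simp [hU, hB, _root_.map_mul]; ring), ← Finset.mul_sum, ← map_sum, hwv]
  have e10 : (B * U) 1 0 = -(x⁻¹) * ρ (s * (((p:ℝ)+1) * t)) := by
    rw [Matrix.mul_apply]
    rw [Finset.sum_congr rfl (fun j _ => show B 1 j * U j 0 = -(x⁻¹) * ρ (s * (v j * w j)) by
      simp [hU, hB, _root_.map_mul]; ring), ← Finset.mul_sum, ← map_sum, ← Finset.mul_sum, hvw]
  have e11 : (B * U) 1 1 = -(x⁻¹) * ρ (s * ((p:ℝ)+1)) := by
    rw [Matrix.mul_apply]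
    rw [Finset.sum_congr rfl (fun j _ => show B 1 j * U j 1 = -(x⁻¹) * ρ (s * (v j * v j)) by
      simp [hU, hB, _root_.map_mul]; ring), ← Finset.mul_sum, ← map_sum, ← Finset.mul_sum, hv2]
  -- assemble
  have hsumK : ρ lam1 + ρ lam2 = ρ ((p:ℝ)+2) := by rw [← _root_.map_add, hsum]
  have hprodK : ρ lam1 * ρ lam2 = ρ (((p:ℝ)+2-1) * s) := by rw [← _root_.map_mul, hprod]
  have hrhs : φ ((X - C lam1) * (X - C lam2) * X ^ p)
      = x^p * (x^2 - (ρ lam1 + ρ lam2) * x + ρ lam1 * ρ lam2) := by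
    simp only [_root_.map_mul, map_sub, map_pow]
    show (x - ρ lam1) * (x - ρ lam2) * x ^ p = _
    ring
  have hsR : s = 1 - t^2 := by linear_combination hts
  rw [hdet, Matrix.det_fin_two, hrhs, hsumK, hprodK]
  simp only [Matrix.add_apply, Matrix.one_apply_eq,
    Matrix.one_apply_ne (show (0:Fin 2) ≠ 1 by decide),
    Matrix.one_apply_ne (show (1:Fin 2) ≠ 0 by decide), e00, e01, e10, e11, zero_add,
    hsR, _root_.map_mul, _root_.map_add, _root_.map_pow, _root_.map_one, map_sub, map_ofNat]
  rw [pow_add]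
  linear_combination x ^ p * (-(ρ (p:ℝ) + 2) * x + ((1 + (ρ (p:ℝ) + 1) * ρ t ^ 2) * ((1 - ρ t ^ 2) * (ρ (p:ℝ) + 1)) - ((ρ (p:ℝ) + 1) * ρ t) * ((1 - ρ t ^ 2) * ((ρ (p:ℝ) + 1) * ρ t))) * (x * x⁻¹ + 1)) * mul_inv_cancel₀ hx0

set_option maxHeartbeats 1000000 in
/-- **Spectrum of the Gram matrix of the two-center valuation matrix.** For the `m × n` matrix
`A` whose first column is `1/√k` on the first `k` rows and `0` elsewhere, and whose remaining
`n − 1` columns are the uniform vector `1/√m` (with `k ∣ m`, `k < m`, `n ≥ 2`), the matrix `AᵀA`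
has exactly two nonzero eigenvalues `λ₁,₂ = (n ± √(n² − 4(n−1)(1 − k/m)))/2`, each of
multiplicity `1`: its characteristic polynomial is `(X − λ₁)(X − λ₂)·X^{n−2}` with
`λ₁ ≠ λ₂`, both nonzero. Moreover `((λ₁−1)(λ₂−1))²(m−k)² = k²(λ₁λ₂)²`. -/
theorem gram_charpoly_two_center_matrix {k m n : ℕ}
    (hk : 0 < k) (hdvd : k ∣ m) (hkm : k < m) (hn : 2 ≤ n)
    (A : Matrix (Fin m) (Fin n) ℝ)
    (hA1 : ∀ (j : Fin m) (i : Fin n), (i : ℕ) = 0 →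
      A j i = if (j : ℕ) < k then 1 / Real.sqrt k else 0)
    (hA2 : ∀ (j : Fin m) (i : Fin n), (i : ℕ) ≠ 0 → A j i = 1 / Real.sqrt m)
    (lam1 lam2 : ℝ)
    (h1 : lam1 = ((n : ℝ) +
      Real.sqrt ((n : ℝ) ^ 2 - 4 * ((n : ℝ) - 1) * (1 - (k : ℝ) / m))) / 2)
    (h2 : lam2 = ((n : ℝ) -
      Real.sqrt ((n : ℝ) ^ 2 - 4 * ((n : ℝ) - 1) * (1 - (k : ℝ) / m))) / 2) :
    (Aᵀ * A).charpoly = (X - C lam1) * (X - C lam2) * X ^ (n - 2) ∧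
    lam1 ≠ 0 ∧ lam2 ≠ 0 ∧ lam1 ≠ lam2 ∧
    ((lam1 - 1) * (lam2 - 1)) ^ 2 * ((m : ℝ) - k) ^ 2 = (k : ℝ) ^ 2 * (lam1 * lam2) ^ 2 := by
  obtain ⟨p, rfl⟩ : ∃ p, n = p + 2 := ⟨n - 2, by omega⟩
  have hm : 0 < m := lt_of_le_of_lt (Nat.zero_le k) hkm
  have hmR : (0:ℝ) < m := by exact_mod_cast hm
  have hkR : (0:ℝ) < k := by exact_mod_cast hk
  have hnR : (2:ℝ) ≤ ((p:ℝ)+2) := by linarith [Nat.cast_nonneg (α := ℝ) p]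
  have hkmR : (k:ℝ) < m := by exact_mod_cast hkm
  have hcast : (((p+2:ℕ)):ℝ) = (p:ℝ)+2 := by push_cast; ring
  rw [hcast] at h1 h2
  set s : ℝ := 1 - (k:ℝ)/m with hs
  have hs_pos : 0 < s := by
    have : (k:ℝ)/m < 1 := (div_lt_one hmR).mpr hkmR
    simp only [hs]; linarith
  set D : ℝ := ((p:ℝ)+2) ^ 2 - 4 * (((p:ℝ)+2) - 1) * (1 - (k : ℝ) / m) with hD
  have hD_pos : 0 < D := by
    rw [hD]
    nlinarith [sq_nonneg ((p:ℝ)), mul_pos (show (0:ℝ) < ((p:ℝ)+2)-1 by linarith)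
      (div_pos hkR hmR)]
  have hsqD : Real.sqrt D ^ 2 = D := Real.sq_sqrt hD_pos.le
  have hsqD_pos : 0 < Real.sqrt D := Real.sqrt_pos.mpr hD_pos
  have hsum : lam1 + lam2 = (p:ℝ)+2 := by rw [h1, h2]; ring
  have hprod : lam1 * lam2 = (((p:ℝ)+2) - 1) * s := by
    rw [h1, h2]
    have e : ((((p:ℝ)+2) + Real.sqrt D) / 2) * ((((p:ℝ)+2) - Real.sqrt D) / 2)
        = (((p:ℝ)+2)^2 - Real.sqrt D ^ 2) / 4 := by ring
    rw [e, hsqD, hD]; ring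
  have hlam1_pos : 0 < lam1 := by rw [h1]; linarith
  have hprod_pos : 0 < lam1 * lam2 := by rw [hprod]; nlinarith
  have hlam2_pos : 0 < lam2 := by nlinarith [hprod_pos, hlam1_pos]
  have hne : lam1 ≠ lam2 := by rw [h1, h2]; intro h; nlinarith
  have hkey : (lam1 - 1) * (lam2 - 1) = -((((p:ℝ)+2) - 1) * ((k:ℝ)/m)) := by
    have e : (lam1-1)*(lam2-1) = lam1*lam2 - (lam1+lam2) + 1 := by ring
    rw [e, hprod, hsum, hs]; ring
  refine ⟨?_, hlam1_pos.ne', hlam2_pos.ne', hne, ?_⟩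
  · -- the characteristic polynomial
    set t : ℝ := Real.sqrt k / Real.sqrt m with ht
    have hsk : Real.sqrt k ≠ 0 := ne_of_gt (Real.sqrt_pos.mpr hkR)
    have hsm : Real.sqrt m ≠ 0 := ne_of_gt (Real.sqrt_pos.mpr hmR)
    have ht2 : t^2 = (k:ℝ)/m := by
      rw [ht, div_pow, Real.sq_sqrt hkR.le, Real.sq_sqrt hmR.le]
    have hts : t^2 + s = 1 := by rw [ht2, hs]; ring
    have hkt : (k:ℝ) * (1 / Real.sqrt k * (1 / Real.sqrt m)) = t := by
      have h1' : (k:ℝ)/Real.sqrt k = Real.sqrt k := Real.div_sqrt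
      calc (k:ℝ) * (1/Real.sqrt k * (1/Real.sqrt m))
          = ((k:ℝ)/Real.sqrt k) * (1/Real.sqrt m) := by ring
        _ = Real.sqrt k * (1/Real.sqrt m) := by rw [h1']
        _ = t := by rw [ht]; ring
    have hsumk : ∀ c : ℝ, (∑ l : Fin m, if (l:ℕ) < k then c else 0) = k * c := by
      intro c
      rw [Fin.sum_univ_eq_sum_range (fun l => if l < k then c else 0) m, ← Finset.sum_filter]
      have e : (Finset.range m).filter (fun l => l < k) = Finset.range k := by
        ext a; simp; omega
      rw [e, Finset.sum_const, Finset.card_range, nsmul_eq_mul]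
    have hAG : Aᵀ * A = Matrix.of (fun i j : Fin (p+2) =>
        (if (i:ℕ) = 0 then (1:ℝ) else t) * (if (j:ℕ) = 0 then 1 else t)
        + s * ((if (i:ℕ) = 0 then 0 else 1) * (if (j:ℕ) = 0 then 0 else 1))) := by
      ext i j
      rw [Matrix.mul_apply, Matrix.of_apply]
      simp only [Matrix.transpose_apply]
      by_cases hi : (i:ℕ) = 0 <;> by_cases hj : (j:ℕ) = 0
      · rw [Finset.sum_congr rfl (fun l _ =>
          show A l i * A l j = if (l:ℕ) < k then 1/(k:ℝ) else 0 by
            rw [hA1 l i hi, hA1 l j hj]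
            by_cases h : (l:ℕ) < k
            · simp only [if_pos h]
              rw [div_mul_div_comm, one_mul, Real.mul_self_sqrt hkR.le]
            · simp [h]), hsumk]
        simp only [if_pos hi, if_pos hj]
        field_simp
        ring
      · rw [Finset.sum_congr rfl (fun l _ => show A l i * A l j
            = if (l:ℕ) < k then 1/Real.sqrt k * (1/Real.sqrt m) else 0 by
          rw [hA1 l i hi, hA2 l j hj]
          by_cases h : (l:ℕ) < k
          · simp only [if_pos h]
          · simp [h]), hsumk, hkt]
        simp only [if_pos hi, if_neg hj]
        ring
      · rw [Finset.sum_congr rfl (fun l _ => show A l i * A l j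
            = if (l:ℕ) < k then 1/Real.sqrt k * (1/Real.sqrt m) else 0 by
          rw [hA2 l i hi, hA1 l j hj]
          by_cases h : (l:ℕ) < k
          · simp only [if_pos h]; ring
          · simp [h]), hsumk, hkt]
        simp only [if_neg hi, if_pos hj]
        ring
      · rw [Finset.sum_congr rfl (fun l _ => show A l i * A l j
            = 1/(m:ℝ) by
          rw [hA2 l i hi, hA2 l j hj, div_mul_div_comm, one_mul,
            Real.mul_self_sqrt hmR.le]), Finset.sum_const, Finset.card_univ,
          Fintype.card_fin, nsmul_eq_mul]
        simp only [if_neg hi, if_neg hj]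
        have e2 : t * t + s * (1 * 1) = t^2 + s := by ring
        rw [e2, hts]
        field_simp
    rw [hAG, show p + 2 - 2 = p from by omega]
    exact gram_aux p t s lam1 lam2 hts hsum hprod
  · rw [hkey, hprod, hs]
    field_simp
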